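/- Let (X,Y) be a source with X binary, and (X₁,Y₁),(X₂,Y₂) independent copies. Set U₁ = X₁⊕X₂ and U₂ = X₂. Then Z(U₁ | Y₁,Y₂) + Z(U₂ | Y₁,Y₂,U₁) ≤ 2·Z(X|Y). -/
import Mathlib

/-- Conditional source Bhattacharyya parameter
`Z(X|W) = 2 Σ_w √(q(0,w) q(1,w))` for a joint pmf `q x w` with binary `x`. -/
noncomputable def bhat {β : Type*} (q : Bool → β → ℝ) : ℝ :=
  2 * ∑' w : β, Real.sqrt (q false w * q true w)

private lemma key_ineq (a b c d : ℝ) (ha : 0 ≤ a) (hb : 0 ≤ b) (hc : 0 ≤ c) (hd : 0 ≤ d) :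
    Real.sqrt ((a * c + b * d) * (b * c + a * d)) ≤
      Real.sqrt (a * b) * (c + d) + (a + b) * Real.sqrt (c * d)
        - 2 * (Real.sqrt (a * b) * Real.sqrt (c * d)) := by
  set s := Real.sqrt (a * b) with hs
  set t := Real.sqrt (c * d) with ht
  have hs0 : 0 ≤ s := Real.sqrt_nonneg _
  have ht0 : 0 ≤ t := Real.sqrt_nonneg _
  have hs2 : s ^ 2 = a * b := Real.sq_sqrt (mul_nonneg ha hb)
  have ht2 : t ^ 2 = c * d := Real.sq_sqrt (mul_nonneg hc hd)
  have h2s : 2 * s ≤ a + b := by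
    have h1 : (2 * s) ^ 2 ≤ (a + b) ^ 2 := by nlinarith [sq_nonneg (a - b)]
    calc 2 * s = Real.sqrt ((2 * s) ^ 2) := (Real.sqrt_sq (by positivity)).symm
      _ ≤ Real.sqrt ((a + b) ^ 2) := Real.sqrt_le_sqrt h1
      _ = a + b := Real.sqrt_sq (by positivity)
  have h2t : 2 * t ≤ c + d := by
    have h1 : (2 * t) ^ 2 ≤ (c + d) ^ 2 := by nlinarith [sq_nonneg (c - d)]
    calc 2 * t = Real.sqrt ((2 * t) ^ 2) := (Real.sqrt_sq (by positivity)).symm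
      _ ≤ Real.sqrt ((c + d) ^ 2) := Real.sqrt_le_sqrt h1
      _ = c + d := Real.sqrt_sq (by positivity)
  have hRnn : 0 ≤ s * (c + d) + (a + b) * t - 2 * (s * t) := by nlinarith
  have hid : (s * (c + d) + (a + b) * t - 2 * (s * t)) ^ 2
      - (a * c + b * d) * (b * c + a * d)
      = 2 * (s * t) * ((a + b - 2 * s) * (c + d - 2 * t)) := by
    linear_combination ((c - d) ^ 2 - 4 * (t ^ 2 - c * d)) * hs2 + (a - b) ^ 2 * ht2
  have hprod : 0 ≤ 2 * (s * t) * ((a + b - 2 * s) * (c + d - 2 * t)) :=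
    mul_nonneg (by positivity)
      (mul_nonneg (by linarith) (by linarith))
  have hsq : (a * c + b * d) * (b * c + a * d)
      ≤ (s * (c + d) + (a + b) * t - 2 * (s * t)) ^ 2 := by linarith
  calc Real.sqrt ((a * c + b * d) * (b * c + a * d))
      ≤ Real.sqrt ((s * (c + d) + (a + b) * t - 2 * (s * t)) ^ 2) := Real.sqrt_le_sqrt hsq
    _ = s * (c + d) + (a + b) * t - 2 * (s * t) := Real.sqrt_sq hRnn

set_option maxHeartbeats 1000000 in
/-- `Z(U₁ | Y₁,Y₂) + Z(U₂ | Y₁,Y₂,U₁) ≤ 2 Z(X|Y)` for `U₁ = X₁⊕X₂`, `U₂ = X₂`. -/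
theorem stmt5 (p : Bool → ℕ → ℝ) (hp : ∀ x y, 0 ≤ p x y)
    (hsum : HasSum (fun z : Bool × ℕ => p z.1 z.2) 1) :
    bhat (fun (u₁ : Bool) (y : ℕ × ℕ) =>
        ∑ x₂ : Bool, p (xor u₁ x₂) y.1 * p x₂ y.2) +
      bhat (fun (u₂ : Bool) (w : ℕ × ℕ × Bool) =>
        p (xor w.2.2 u₂) w.1 * p u₂ w.2.1) ≤ 2 * bhat p := by
  classical
  set g : ℕ → ℝ := fun y => Real.sqrt (p false y * p true y) with hg
  set m : ℕ → ℝ := fun y => p false y + p true y with hm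
  have hg0 : ∀ y, 0 ≤ g y := fun y => Real.sqrt_nonneg _
  have hm0 : ∀ y, 0 ≤ m y := fun y => add_nonneg (hp _ _) (hp _ _)
  -- marginal sums to 1
  have hmarg : HasSum m 1 := by
    have h1 : HasSum (fun z : ℕ × Bool => p z.2 z.1) 1 :=
      ((Equiv.prodComm ℕ Bool).hasSum_iff).mpr hsum
    refine h1.prod_fiberwise (g := m) (fun y => ?_)
    have : HasSum (fun x : Bool => p x y) (∑ x : Bool, p x y) :=
      hasSum_fintype (fun x : Bool => p x y)
    simpa [hm, Fintype.sum_bool, add_comm] using this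
  -- g ≤ m / 2 pointwise, so g summable
  have hgle : ∀ y, g y ≤ m y / 2 := by
    intro y
    have h1 : p false y * p true y ≤ (m y / 2) ^ 2 := by
      have := sq_nonneg (p false y - p true y); simp only [hm]; nlinarith
    calc g y = Real.sqrt (p false y * p true y) := rfl
      _ ≤ Real.sqrt ((m y / 2) ^ 2) := Real.sqrt_le_sqrt h1
      _ = m y / 2 := Real.sqrt_sq (div_nonneg (hm0 y) (by norm_num))
  have hgsummable : Summable g :=
    Summable.of_nonneg_of_le hg0 hgle (hmarg.summable.div_const 2)
  set S : ℝ := ∑' y, g y with hS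
  have hgS : HasSum g S := hgsummable.hasSum
  have hbp : bhat p = 2 * S := rfl
  -- second term equals 2 * (S * (S * 2))
  have hsecond : bhat (fun (u₂ : Bool) (w : ℕ × ℕ × Bool) =>
      p (xor w.2.2 u₂) w.1 * p u₂ w.2.1) = 2 * (S * (S * 2)) := by
    have hfun : (fun w : ℕ × ℕ × Bool =>
        Real.sqrt ((p (xor w.2.2 false) w.1 * p false w.2.1) *
          (p (xor w.2.2 true) w.1 * p true w.2.1)))
        = fun w : ℕ × (ℕ × Bool) => g w.1 * (g w.2.1 * 1) := by
      funext w
      rcases w with ⟨y1, y2, u⟩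
      have h1 : (p (xor u false) y1 * p false y2) * (p (xor u true) y1 * p true y2)
          = (p false y1 * p true y1) * (p false y2 * p true y2) := by
        cases u <;> simp only [Bool.xor_false, Bool.xor_true, Bool.not_false, Bool.not_true] <;>
          try ring
      simp only [h1, Real.sqrt_mul (mul_nonneg (hp _ _) (hp _ _)), mul_one]
      try rfl
    have hone : HasSum (fun _ : Bool => (1 : ℝ)) 2 := by
      have : HasSum (fun _ : Bool => (1 : ℝ)) (∑ _ : Bool, (1 : ℝ)) :=
        hasSum_fintype _
      simpa using this
    have hinner : HasSum (fun z : ℕ × Bool => g z.1 * 1) (S * 2) :=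
      hgS.mul hone (hgS.summable.mul_of_nonneg hone.summable hg0 (fun _ => zero_le_one))
    have houter : HasSum (fun w : ℕ × (ℕ × Bool) => g w.1 * (g w.2.1 * 1)) (S * (S * 2)) :=
      hgS.mul hinner (hgS.summable.mul_of_nonneg hinner.summable hg0
        (fun z => mul_nonneg (hg0 _) zero_le_one))
    show 2 * (∑' w : ℕ × ℕ × Bool, Real.sqrt
        ((p (xor w.2.2 false) w.1 * p false w.2.1) *
          (p (xor w.2.2 true) w.1 * p true w.2.1))) = 2 * (S * (S * 2))
    rw [hfun, houter.tsum_eq]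
  -- first term bounded
  set R : ℕ × ℕ → ℝ := fun y => g y.1 * m y.2 + m y.1 * g y.2 - 2 * (g y.1 * g y.2) with hR
  have hRsum : HasSum R (S * 1 + 1 * S - 2 * (S * S)) := by
    have h1 : HasSum (fun y : ℕ × ℕ => g y.1 * m y.2) (S * 1) :=
      hgS.mul hmarg (hgS.summable.mul_of_nonneg hmarg.summable hg0 hm0)
    have h2 : HasSum (fun y : ℕ × ℕ => m y.1 * g y.2) (1 * S) :=
      hmarg.mul hgS (hmarg.summable.mul_of_nonneg hgS.summable hm0 hg0)
    have h3 : HasSum (fun y : ℕ × ℕ => g y.1 * g y.2) (S * S) :=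
      hgS.mul hgS (hgS.summable.mul_of_nonneg hgS.summable hg0 hg0)
    exact (h1.add h2).sub (h3.mul_left 2)
  set L : ℕ × ℕ → ℝ := fun y =>
    Real.sqrt ((∑ x₂ : Bool, p (xor false x₂) y.1 * p x₂ y.2) *
      (∑ x₂ : Bool, p (xor true x₂) y.1 * p x₂ y.2)) with hL
  have hLle : ∀ y, L y ≤ R y := by
    intro ⟨y1, y2⟩
    have h1 : (∑ x₂ : Bool, p (xor false x₂) y1 * p x₂ y2)
        = p false y1 * p false y2 + p true y1 * p true y2 := by
      simp [Fintype.sum_bool]; ring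
    have h2 : (∑ x₂ : Bool, p (xor true x₂) y1 * p x₂ y2)
        = p true y1 * p false y2 + p false y1 * p true y2 := by
      simp [Fintype.sum_bool]; ring
    have hk := key_ineq (p false y1) (p true y1) (p false y2) (p true y2)
      (hp _ _) (hp _ _) (hp _ _) (hp _ _)
    show Real.sqrt ((∑ x₂ : Bool, p (xor false x₂) y1 * p x₂ y2) *
        (∑ x₂ : Bool, p (xor true x₂) y1 * p x₂ y2))
      ≤ g y1 * m y2 + m y1 * g y2 - 2 * (g y1 * g y2)
    rw [h1, h2]
    exact hk
  have hL0 : ∀ y, 0 ≤ L y := fun y => Real.sqrt_nonneg _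
  have hLsummable : Summable L := Summable.of_nonneg_of_le hL0 hLle hRsum.summable
  have hfirst : bhat (fun (u₁ : Bool) (y : ℕ × ℕ) =>
      ∑ x₂ : Bool, p (xor u₁ x₂) y.1 * p x₂ y.2) ≤ 2 * (S * 1 + 1 * S - 2 * (S * S)) := by
    have h := Summable.tsum_le_tsum hLle hLsummable hRsum.summable
    rw [hRsum.tsum_eq] at h
    show 2 * (∑' y : ℕ × ℕ, Real.sqrt ((∑ x₂ : Bool, p (xor false x₂) y.1 * p x₂ y.2) *
      (∑ x₂ : Bool, p (xor true x₂) y.1 * p x₂ y.2))) ≤ 2 * (S * 1 + 1 * S - 2 * (S * S))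
    linarith
  rw [hbp, hsecond]
  nlinarith [hfirst]
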